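/- Let b > 0 and let u ∈ C¹([0,b], ℂ). For any f ∈ C¹([0,b], ℝ), ( ∫₀ᵇ f'(t)|u(t)|² dt − (f(b) − f(0))|u(0)|² )² ≤ 4 ( ∫₀ᵇ |u'(t)|² dt ) ( ∫₀ᵇ (f(b) − f(t))² |u(t)|² dt ). -/

import Mathlib

open MeasureTheory Set intervalIntegral

/-- Cauchy–Schwarz inequality for integrals of real functions. -/
lemma cs_aux {μ : Measure ℝ} (p q : ℝ → ℝ)
    (hp : Integrable (fun x => p x ^ 2) μ) (hq : Integrable (fun x => q x ^ 2) μ)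
    (hpq : Integrable (fun x => p x * q x) μ) :
    (∫ x, p x * q x ∂μ) ^ 2 ≤ (∫ x, p x ^ 2 ∂μ) * (∫ x, q x ^ 2 ∂μ) := by
  set A := ∫ x, p x ^ 2 ∂μ with hA
  set B := ∫ x, p x * q x ∂μ with hB
  set C := ∫ x, q x ^ 2 ∂μ with hC
  have hA0 : 0 ≤ A := integral_nonneg fun x => sq_nonneg _
  have hC0 : 0 ≤ C := integral_nonneg fun x => sq_nonneg _
  rcases eq_or_lt_of_le hC0 with hC0' | hC0'
  · have hq0 : (fun x => q x ^ 2) =ᵐ[μ] 0 :=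
      (integral_eq_zero_iff_of_nonneg (fun x => sq_nonneg (q x)) hq).mp hC0'.symm
    have hqz : q =ᵐ[μ] 0 := by
      filter_upwards [hq0] with x hx
      exact (pow_eq_zero_iff two_ne_zero).mp hx
    have hB0 : B = 0 := by
      rw [hB]
      have hz : (fun x => p x * q x) =ᵐ[μ] 0 := by
        filter_upwards [hqz] with x hx
        simp [hx]
      rw [integral_congr_ae hz]
      simp
    rw [hB0, ← hC0']
    simp
  · have h0 : 0 ≤ ∫ x, (C * p x - B * q x) ^ 2 ∂μ := integral_nonneg fun x => sq_nonneg _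
    have hexp : ∫ x, (C * p x - B * q x) ^ 2 ∂μ = C * (C * A - B * B) := by
      have heq : (fun x => (C * p x - B * q x) ^ 2)
          = fun x => C ^ 2 * p x ^ 2 - (2 * C * B) * (p x * q x) + B ^ 2 * q x ^ 2 := by
        funext x; ring
      have hi1 : Integrable (fun x => C ^ 2 * p x ^ 2 - 2 * C * B * (p x * q x)) μ :=
        (hp.const_mul _).sub (hpq.const_mul _)
      have hi2 : Integrable (fun x => B ^ 2 * q x ^ 2) μ := hq.const_mul _
      have hi3 : Integrable (fun x => C ^ 2 * p x ^ 2) μ := hp.const_mul _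
      have hi4 : Integrable (fun x => 2 * C * B * (p x * q x)) μ := hpq.const_mul _
      rw [heq, integral_add hi1 hi2, integral_sub hi3 hi4,
        MeasureTheory.integral_const_mul, MeasureTheory.integral_const_mul, MeasureTheory.integral_const_mul]
      ring
    rw [hexp] at h0
    nlinarith [h0, hC0']

theorem cauchy_schwarz_step (b : ℝ) (hb : 0 < b) (u : ℝ → ℂ) (f : ℝ → ℝ)
    (hu : ContDiffOn ℝ 1 u (Set.Icc 0 b)) (hf : ContDiffOn ℝ 1 f (Set.Icc 0 b)) :
    ((∫ t in (0:ℝ)..b, deriv f t * ‖u t‖ ^ 2) - (f b - f 0) * ‖u 0‖ ^ 2) ^ 2 ≤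
      4 * (∫ t in (0:ℝ)..b, ‖deriv u t‖ ^ 2)
        * ∫ t in (0:ℝ)..b, (f b - f t) ^ 2 * ‖u t‖ ^ 2 := by
  have hbb : (0:ℝ) ≤ b := hb.le
  have huIcc : Set.uIcc (0:ℝ) b = Set.Icc 0 b := Set.uIcc_of_le hbb
  have hUD : UniqueDiffOn ℝ (Set.Icc (0:ℝ) b) := uniqueDiffOn_Icc hb
  set u' := derivWithin u (Set.Icc (0:ℝ) b) with hu'def
  set f' := derivWithin f (Set.Icc (0:ℝ) b) with hf'def
  have hu'c : ContinuousOn u' (Set.Icc 0 b) := hu.continuousOn_derivWithin hUD le_rfl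
  have hf'c : ContinuousOn f' (Set.Icc 0 b) := hf.continuousOn_derivWithin hUD le_rfl
  have huc : ContinuousOn u (Set.Icc 0 b) := hu.continuousOn
  have hfc : ContinuousOn f (Set.Icc 0 b) := hf.continuousOn
  have hnhds : ∀ t ∈ Set.Ioo (0:ℝ) b, Set.Icc (0:ℝ) b ∈ nhds t := fun t ht =>
    Icc_mem_nhds ht.1 ht.2
  have hud : ∀ t ∈ Set.Ioo (0:ℝ) b, HasDerivAt u (u' t) t := by
    intro t ht
    have hmem := hnhds t ht
    have hdiff : DifferentiableAt ℝ u t := (hu.contDiffAt hmem).differentiableAt one_ne_zero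
    rw [hu'def, derivWithin_of_mem_nhds hmem]
    exact hdiff.hasDerivAt
  have hfd : ∀ t ∈ Set.Ioo (0:ℝ) b, HasDerivAt f (f' t) t := by
    intro t ht
    have hmem := hnhds t ht
    have hdiff : DifferentiableAt ℝ f t := (hf.contDiffAt hmem).differentiableAt one_ne_zero
    rw [hf'def, derivWithin_of_mem_nhds hmem]
    exact hdiff.hasDerivAt
  set g' : ℝ → ℝ := fun t => 2 * ((u t).re * (u' t).re + (u t).im * (u' t).im) with hg'def
  have hg'c : ContinuousOn g' (Set.Icc 0 b) := by
    apply continuousOn_const.mul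
    exact ((Complex.continuous_re.comp_continuousOn huc).mul
        (Complex.continuous_re.comp_continuousOn hu'c)).add
      ((Complex.continuous_im.comp_continuousOn huc).mul
        (Complex.continuous_im.comp_continuousOn hu'c))
  have hgderiv : ∀ t ∈ Set.Ioo (0:ℝ) b, HasDerivAt (fun s => ‖u s‖ ^ 2) (g' t) t := by
    intro t ht
    have h := hud t ht
    have hre : HasDerivAt (fun s => (u s).re) ((u' t).re) t :=
      Complex.reCLM.hasFDerivAt.comp_hasDerivAt t h
    have him : HasDerivAt (fun s => (u s).im) ((u' t).im) t :=
      Complex.imCLM.hasFDerivAt.comp_hasDerivAt t h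
    have h2 : HasDerivAt (fun s => (u s).re * (u s).re + (u s).im * (u s).im) _ t :=
      (hre.mul hre).add (him.mul him)
    have heq : (fun s => ‖u s‖ ^ 2) = fun s => (u s).re * (u s).re + (u s).im * (u s).im := by
      funext s
      rw [Complex.sq_norm, Complex.normSq_apply]
    rw [heq, hg'def]
    convert h2 using 1
    ring
  set φ : ℝ → ℝ := fun t => f' t * ‖u t‖ ^ 2 + (f t - f b) * g' t with hφdef
  have hφc : ContinuousOn φ (Set.Icc 0 b) := by
    exact (hf'c.mul ((huc.norm).pow 2)).add ((hfc.sub continuousOn_const).mul hg'c)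
  have hφint : IntervalIntegrable φ volume 0 b := by
    apply ContinuousOn.intervalIntegrable
    rwa [huIcc]
  have hFTC : ∫ t in (0:ℝ)..b, φ t
      = (f b - f b) * ‖u b‖ ^ 2 - (f 0 - f b) * ‖u 0‖ ^ 2 := by
    apply intervalIntegral.integral_eq_sub_of_hasDerivAt_of_le
      (f := fun t => (f t - f b) * ‖u t‖ ^ 2) hbb
    · exact (hfc.sub continuousOn_const).mul ((huc.norm).pow 2)
    · intro t ht
      exact ((hfd t ht).sub_const (f b)).mul (hgderiv t ht)
    · exact hφint
  have hint1 : IntervalIntegrable (fun t => f' t * ‖u t‖ ^ 2) volume 0 b := by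
    apply ContinuousOn.intervalIntegrable
    rw [huIcc]
    exact hf'c.mul ((huc.norm).pow 2)
  have hint2 : IntervalIntegrable (fun t => (f t - f b) * g' t) volume 0 b := by
    apply ContinuousOn.intervalIntegrable
    rw [huIcc]
    exact (hfc.sub continuousOn_const).mul hg'c
  have hsplit : ∫ t in (0:ℝ)..b, φ t
      = (∫ t in (0:ℝ)..b, f' t * ‖u t‖ ^ 2) + ∫ t in (0:ℝ)..b, (f t - f b) * g' t :=
    intervalIntegral.integral_add hint1 hint2
  have hae : ∀ᵐ x : ℝ, x ≠ b := by
    rw [MeasureTheory.ae_iff]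
    simp
  have hcongr1 : ∫ t in (0:ℝ)..b, deriv f t * ‖u t‖ ^ 2
      = ∫ t in (0:ℝ)..b, f' t * ‖u t‖ ^ 2 := by
    apply intervalIntegral.integral_congr_ae
    filter_upwards [hae] with x hx hxmem
    rw [Set.uIoc_of_le hbb] at hxmem
    have hxoo : x ∈ Set.Ioo (0:ℝ) b := ⟨hxmem.1, lt_of_le_of_ne hxmem.2 hx⟩
    rw [hf'def, derivWithin_of_mem_nhds (hnhds x hxoo)]
  have hcongr2 : ∫ t in (0:ℝ)..b, ‖deriv u t‖ ^ 2
      = ∫ t in (0:ℝ)..b, ‖u' t‖ ^ 2 := by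
    apply intervalIntegral.integral_congr_ae
    filter_upwards [hae] with x hx hxmem
    rw [Set.uIoc_of_le hbb] at hxmem
    have hxoo : x ∈ Set.Ioo (0:ℝ) b := ⟨hxmem.1, lt_of_le_of_ne hxmem.2 hx⟩
    rw [hu'def, derivWithin_of_mem_nhds (hnhds x hxoo)]
  have hI : (∫ t in (0:ℝ)..b, deriv f t * ‖u t‖ ^ 2) - (f b - f 0) * ‖u 0‖ ^ 2
      = - ∫ t in (0:ℝ)..b, (f t - f b) * g' t := by
    rw [hcongr1]
    rw [hsplit] at hFTC
    have hrhs : (f b - f b) * ‖u b‖ ^ 2 - (f 0 - f b) * ‖u 0‖ ^ 2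
        = (f b - f 0) * ‖u 0‖ ^ 2 := by ring
    rw [hrhs] at hFTC
    linarith
  -- Cauchy-Schwarz part
  set p : ℝ → ℝ := fun t => |f b - f t| * ‖u t‖ with hpdef
  set q : ℝ → ℝ := fun t => ‖u' t‖ with hqdef
  have hIocSub : Set.Ioc (0:ℝ) b ⊆ Set.Icc 0 b := Set.Ioc_subset_Icc_self
  have hpc : ContinuousOn p (Set.Icc 0 b) :=
    ((continuousOn_const.sub hfc).abs).mul huc.norm
  have hqc : ContinuousOn q (Set.Icc 0 b) := hu'c.norm
  have intOn : ∀ {h : ℝ → ℝ}, ContinuousOn h (Set.Icc 0 b) →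
      IntegrableOn h (Set.Ioc 0 b) volume := fun hcont =>
    (hcont.integrableOn_Icc).mono_set hIocSub
  have hp2 : Integrable (fun x => p x ^ 2) (volume.restrict (Set.Ioc 0 b)) :=
    intOn ((hpc.pow 2))
  have hq2 : Integrable (fun x => q x ^ 2) (volume.restrict (Set.Ioc 0 b)) :=
    intOn ((hqc.pow 2))
  have hpq : Integrable (fun x => p x * q x) (volume.restrict (Set.Ioc 0 b)) :=
    intOn (hpc.mul hqc)
  have hhc : ContinuousOn (fun t => (f t - f b) * g' t) (Set.Icc 0 b) :=
    (hfc.sub continuousOn_const).mul hg'c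
  have hhint : Integrable (fun t => (f t - f b) * g' t) (volume.restrict (Set.Ioc 0 b)) :=
    intOn hhc
  have hhabs : Integrable (fun t => |(f t - f b) * g' t|) (volume.restrict (Set.Ioc 0 b)) :=
    hhint.abs
  have h2pq : Integrable (fun x => 2 * (p x * q x)) (volume.restrict (Set.Ioc 0 b)) :=
    hpq.const_mul 2
  have hptwise : ∀ x, |(f x - f b) * g' x| ≤ 2 * (p x * q x) := by
    intro x
    have key : |(u x).re * (u' x).re + (u x).im * (u' x).im| ≤ ‖u x‖ * ‖u' x‖ := by
      have h1 : (u x).re * (u' x).re + (u x).im * (u' x).im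
          = (u x * (starRingEnd ℂ) (u' x)).re := by
        simp [Complex.mul_re]
      rw [h1]
      calc |(u x * (starRingEnd ℂ) (u' x)).re| ≤ ‖u x * (starRingEnd ℂ) (u' x)‖ :=
            Complex.abs_re_le_norm _
        _ = ‖u x‖ * ‖u' x‖ := by rw [norm_mul, RCLike.norm_conj]
    rw [hg'def, hpdef, hqdef, abs_mul]
    have h2 : |2 * ((u x).re * (u' x).re + (u x).im * (u' x).im)|
        = 2 * |(u x).re * (u' x).re + (u x).im * (u' x).im| := by
      rw [abs_mul, abs_two]
    have h3 : |f x - f b| = |f b - f x| := abs_sub_comm _ _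
    rw [h2, h3]
    calc |f b - f x| * (2 * |(u x).re * (u' x).re + (u x).im * (u' x).im|)
        ≤ |f b - f x| * (2 * (‖u x‖ * ‖u' x‖)) := by
          apply mul_le_mul_of_nonneg_left _ (abs_nonneg _)
          exact mul_le_mul_of_nonneg_left key (by norm_num)
      _ = 2 * ((|f b - f x| * ‖u x‖) * ‖u' x‖) := by ring
  have habs : |∫ x in Set.Ioc (0:ℝ) b, (f x - f b) * g' x|
      ≤ ∫ x in Set.Ioc (0:ℝ) b, 2 * (p x * q x) := by
    calc |∫ x in Set.Ioc (0:ℝ) b, (f x - f b) * g' x|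
        ≤ ∫ x in Set.Ioc (0:ℝ) b, |(f x - f b) * g' x| :=
          by simpa only [Real.norm_eq_abs] using
            MeasureTheory.norm_integral_le_integral_norm
              (μ := volume.restrict (Set.Ioc 0 b)) (fun x => (f x - f b) * g' x)
      _ ≤ ∫ x in Set.Ioc (0:ℝ) b, 2 * (p x * q x) :=
          integral_mono hhabs h2pq (fun x => hptwise x)
  have hcs := cs_aux p q hp2 hq2 hpq
  have hp2eq : (∫ x in Set.Ioc (0:ℝ) b, p x ^ 2)
      = ∫ x in Set.Ioc (0:ℝ) b, (f b - f x) ^ 2 * ‖u x‖ ^ 2 := by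
    congr 1
    funext x
    rw [hpdef]
    rw [mul_pow, sq_abs]
  rw [hI, hcongr2, neg_sq, intervalIntegral.integral_of_le hbb,
    intervalIntegral.integral_of_le hbb, intervalIntegral.integral_of_le hbb]
  have h2int : (∫ x in Set.Ioc (0:ℝ) b, 2 * (p x * q x))
      = 2 * ∫ x in Set.Ioc (0:ℝ) b, p x * q x := MeasureTheory.integral_const_mul 2 _
  have hfinal : (∫ x in Set.Ioc (0:ℝ) b, (f x - f b) * g' x) ^ 2
      ≤ (2 * ∫ x in Set.Ioc (0:ℝ) b, p x * q x) ^ 2 := by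
    rw [← sq_abs (∫ x in Set.Ioc (0:ℝ) b, (f x - f b) * g' x)]
    apply pow_le_pow_left₀ (abs_nonneg _)
    rw [← h2int]
    exact habs
  calc (∫ x in Set.Ioc (0:ℝ) b, (f x - f b) * g' x) ^ 2
      ≤ (2 * ∫ x in Set.Ioc (0:ℝ) b, p x * q x) ^ 2 := hfinal
    _ = 4 * (∫ x in Set.Ioc (0:ℝ) b, p x * q x) ^ 2 := by ring
    _ ≤ 4 * ((∫ x in Set.Ioc (0:ℝ) b, p x ^ 2) * ∫ x in Set.Ioc (0:ℝ) b, q x ^ 2) := by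
        linarith [hcs]
    _ = 4 * (∫ x in Set.Ioc (0:ℝ) b, ‖u' x‖ ^ 2)
        * ∫ x in Set.Ioc (0:ℝ) b, (f b - f x) ^ 2 * ‖u x‖ ^ 2 := by
        rw [hp2eq, hqdef]
        ring
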